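/- arXiv:1402.3317 — 4 statements merged into one kernel-verified Lean document; each statement's English description precedes it below -/
import Mathlib

section
/- Suppose P⁺ is a symmetric positive definite matrix satisfying the algebraic descriptor Riccati equation P⁺ = (Eᵀ (A P⁺ Aᵀ + Q)⁻¹ E + Hᵀ R⁻¹ H)⁻¹, with Q, R symmetric positive definite and [Eᵀ Hᵀ]ᵀ full column rank. Let P⁻ = A P⁺ Aᵀ + Q and M = P⁺ Aᵀ (P⁻)⁻¹ E. Then (P⁺)⁻¹ = Mᵀ (P⁺)⁻¹ M + Q̄, where Q̄ := Eᵀ (P⁻)⁻¹ Q (P⁻)⁻¹ E + Hᵀ R⁻¹ H. -/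
open Matrix

/-- Riccati-derived Lyapunov equation: if `P⁺` solves the algebraic descriptor Riccati
equation, then `(P⁺)⁻¹ = Mᵀ (P⁺)⁻¹ M + Q̄` with `M = P⁺ Aᵀ (P⁻)⁻¹ E`,
`P⁻ = A P⁺ Aᵀ + Q`, and `Q̄ = Eᵀ (P⁻)⁻¹ Q (P⁻)⁻¹ E + Hᵀ R⁻¹ H`. -/
theorem stmt_6 {n n₁ m : ℕ}
    (E A : Matrix (Fin n₁) (Fin n) ℝ) (H : Matrix (Fin m) (Fin n) ℝ)
    (Q : Matrix (Fin n₁) (Fin n₁) ℝ) (R : Matrix (Fin m) (Fin m) ℝ)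
    (Pp : Matrix (Fin n) (Fin n) ℝ)
    (hQ : Q.PosDef) (hR : R.PosDef) (hPp : Pp.PosDef)
    (hrank : (Matrix.fromRows E H).rank = n)
    (hriccati : Pp = (Eᵀ * (A * Pp * Aᵀ + Q)⁻¹ * E + Hᵀ * R⁻¹ * H)⁻¹) :
    Pp⁻¹ = (Pp * Aᵀ * (A * Pp * Aᵀ + Q)⁻¹ * E)ᵀ * Pp⁻¹ * (Pp * Aᵀ * (A * Pp * Aᵀ + Q)⁻¹ * E) +
      (Eᵀ * (A * Pp * Aᵀ + Q)⁻¹ * Q * (A * Pp * Aᵀ + Q)⁻¹ * E + Hᵀ * R⁻¹ * H) := by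
  set Pm : Matrix (Fin n₁) (Fin n₁) ℝ := A * Pp * Aᵀ + Q with hPm
  have hAPA : (A * Pp * Aᵀ).PosSemidef := by
    have := hPp.posSemidef.mul_mul_conjTranspose_same A
    simpa [Matrix.conjTranspose_eq_transpose_of_trivial] using this
  have hPmpd : Pm.PosDef := by rw [hPm, add_comm]; exact hQ.add_posSemidef hAPA
  have hPmu : IsUnit Pm.det := isUnit_iff_ne_zero.mpr hPmpd.det_pos.ne'
  have hPpu : IsUnit Pp.det := isUnit_iff_ne_zero.mpr hPp.det_pos.ne'
  have hSu : IsUnit (Eᵀ * Pm⁻¹ * E + Hᵀ * R⁻¹ * H) := by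
    rw [← Matrix.isUnit_nonsing_inv_iff, ← hriccati]
    exact (Matrix.isUnit_iff_isUnit_det _).mpr hPpu
  have hinv : Pp⁻¹ = Eᵀ * Pm⁻¹ * E + Hᵀ * R⁻¹ * H := by
    rw [hriccati, Matrix.nonsing_inv_nonsing_inv _ ((Matrix.isUnit_iff_isUnit_det _).mp hSu)]
  have hPpinv : Pp⁻¹ * Pp = 1 := Matrix.nonsing_inv_mul _ hPpu
  have hPpT : Ppᵀ = Pp := by
    simpa [Matrix.IsHermitian, Matrix.conjTranspose_eq_transpose_of_trivial] using hPp.isHermitian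
  have hPmT : Pmᵀ = Pm := by
    simpa [Matrix.IsHermitian, Matrix.conjTranspose_eq_transpose_of_trivial] using hPmpd.isHermitian
  have hPmH : Pm⁻¹ᵀ = Pm⁻¹ := by
    rw [show Pm⁻¹ᵀ = Pmᵀ⁻¹ from (Matrix.transpose_nonsing_inv Pm), hPmT]
  rw [hinv]
  have hMT : (Pp * Aᵀ * Pm⁻¹ * E)ᵀ = Eᵀ * Pm⁻¹ * A * Pp := by
    simp [Matrix.transpose_mul, hPmH, hPpT, Matrix.mul_assoc]
  have key : (Pp * Aᵀ * Pm⁻¹ * E)ᵀ * Pp⁻¹ * (Pp * Aᵀ * Pm⁻¹ * E)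
      = Eᵀ * Pm⁻¹ * (A * Pp * Aᵀ) * Pm⁻¹ * E := by
    rw [hMT]
    have e1 : Eᵀ * Pm⁻¹ * A * Pp * Pp⁻¹ * (Pp * Aᵀ * Pm⁻¹ * E)
        = Eᵀ * Pm⁻¹ * A * ((Pp * Pp⁻¹) * (Pp * (Aᵀ * (Pm⁻¹ * E)))) := by
      simp only [Matrix.mul_assoc]
    rw [e1, Matrix.mul_nonsing_inv _ hPpu, one_mul]
    simp only [Matrix.mul_assoc]
  rw [← hinv, key]
  have h1 : Eᵀ * Pm⁻¹ * (A * Pp * Aᵀ) * Pm⁻¹ * E + (Eᵀ * Pm⁻¹ * Q * Pm⁻¹ * E + Hᵀ * R⁻¹ * H)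
      = Eᵀ * Pm⁻¹ * Pm * Pm⁻¹ * E + Hᵀ * R⁻¹ * H := by
    rw [hPm, Matrix.mul_add, Matrix.add_mul, Matrix.add_mul, add_assoc]
  rw [h1, Matrix.nonsing_inv_mul_cancel_right _ _ hPmu, hinv]
end

section
/- Let E, A ∈ ℝ^{n₁×n}, H ∈ ℝ^{m×n}, with Q ∈ ℝ^{n₁×n₁}, R ∈ ℝ^{m×m} symmetric positive definite, and [Eᵀ Hᵀ]ᵀ full column rank. Suppose P∞⁺ is a symmetric positive definite solution of the algebraic descriptor Riccati equation P∞⁺ = (Eᵀ (A P∞⁺ Aᵀ + Q)⁻¹ E + Hᵀ R⁻¹ H)⁻¹. Then the matrix M := ((P∞⁺)⁻¹ + Aᵀ Q⁻¹ A)⁻¹ Aᵀ Q⁻¹ E has spectral radius strictly less than 1. -/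
open Matrix
open scoped ComplexOrder

private lemma eig_of_mem_spectrum {k : ℕ} {M : Matrix (Fin k) (Fin k) ℂ} {μ : ℂ}
    (h : μ ∈ spectrum ℂ M) : ∃ v, v ≠ 0 ∧ M *ᵥ v = μ • v := by
  rw [spectrum.mem_iff] at h
  rw [Matrix.isUnit_iff_isUnit_det, isUnit_iff_ne_zero, not_not] at h
  obtain ⟨v, hv, hv0⟩ := (Matrix.exists_mulVec_eq_zero_iff).mpr h
  refine ⟨v, hv, ?_⟩
  have : (algebraMap ℂ (Matrix (Fin k) (Fin k) ℂ)) μ *ᵥ v = μ • v := by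
    rw [Algebra.algebraMap_eq_smul_one, smul_mulVec, one_mulVec]
  rw [sub_mulVec, sub_eq_zero, this] at hv0
  exact hv0.symm

private lemma map_posDef {k : ℕ} {B : Matrix (Fin k) (Fin k) ℝ} (hB : B.PosDef) :
    (B.map (algebraMap ℝ ℂ)).PosDef := by
  open scoped MatrixOrder in
  obtain ⟨C, hC⟩ := CStarAlgebra.nonneg_iff_eq_star_mul_self.mp hB.posSemidef.nonneg
  have hmap : B.map (algebraMap ℝ ℂ) = (C.map (algebraMap ℝ ℂ))ᴴ * (C.map (algebraMap ℝ ℂ)) := by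
    rw [hC, Matrix.map_mul]
    congr 1
    ext i j
    simp [conjTranspose_apply, Matrix.map_apply, Complex.conj_ofReal]
  have hpsd : (B.map (algebraMap ℝ ℂ)).PosSemidef := hmap ▸ posSemidef_conjTranspose_mul_self _
  have hdet : (B.map (algebraMap ℝ ℂ)).det ≠ 0 := by
    have : (B.map (algebraMap ℝ ℂ)).det = algebraMap ℝ ℂ B.det := ((algebraMap ℝ ℂ).map_det B).symm
    rw [this]
    simpa using hB.det_pos.ne'
  refine .of_dotProduct_mulVec_pos hpsd.isHermitian fun x hx => ?_
  rcases lt_or_eq_of_le (hpsd.dotProduct_mulVec_nonneg x) with h | h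
  · exact h
  · exfalso
    have h0 := (hpsd.dotProduct_mulVec_zero_iff x).mp h.symm
    exact hdet (Matrix.exists_mulVec_eq_zero_iff.mp ⟨x, hx, h0⟩)

private lemma quad_conj {k l : ℕ} (B : Matrix (Fin l) (Fin l) ℝ) (C : Matrix (Fin l) (Fin k) ℝ)
    (x : Fin k → ℝ) :
    star x ⬝ᵥ (Cᵀ * B * C) *ᵥ x = star (C *ᵥ x) ⬝ᵥ B *ᵥ (C *ᵥ x) := by
  rw [← conjTranspose_eq_transpose_of_trivial]
  simp only [star_mulVec, dotProduct_mulVec, vecMul_vecMul]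

private lemma quad_conjC {k l : ℕ} (B : Matrix (Fin l) (Fin l) ℂ) (C : Matrix (Fin l) (Fin k) ℂ)
    (x : Fin k → ℂ) :
    star x ⬝ᵥ (Cᴴ * B * C) *ᵥ x = star (C *ᵥ x) ⬝ᵥ B *ᵥ (C *ᵥ x) := by
  simp only [star_mulVec, dotProduct_mulVec, vecMul_vecMul]

private lemma rank_inj {n n₁ m : ℕ} {E : Matrix (Fin n₁) (Fin n) ℝ} {H : Matrix (Fin m) (Fin n) ℝ}
    (hrank : (Matrix.fromRows E H).rank = n) {x : Fin n → ℝ}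
    (hE : E *ᵥ x = 0) (hH : H *ᵥ x = 0) : x = 0 := by
  set L := (Matrix.fromRows E H).mulVecLin with hL
  have hx : x ∈ LinearMap.ker L := by
    simp only [LinearMap.mem_ker, hL, mulVecLin_apply, fromRows_mulVec, hE, hH]
    ext (i | i) <;> simp
  have hfin : Module.finrank ℝ (LinearMap.range L) + Module.finrank ℝ (LinearMap.ker L)
      = Module.finrank ℝ (Fin n → ℝ) := L.finrank_range_add_finrank_ker
  rw [Module.finrank_pi, Fintype.card_fin] at hfin
  have hr : Matrix.rank (Matrix.fromRows E H) = Module.finrank ℝ (LinearMap.range L) := rfl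
  rw [← hr, hrank] at hfin
  have : Module.finrank ℝ (LinearMap.ker L) = 0 := by omega
  have hker : LinearMap.ker L = ⊥ := Submodule.finrank_eq_zero.mp this
  simpa [hker] using hx

/-- Stability of the smoother coupling matrix: if `P∞⁺` is a symmetric positive definite
solution of the algebraic descriptor Riccati equation, then
`M = ((P∞⁺)⁻¹ + Aᵀ Q⁻¹ A)⁻¹ Aᵀ Q⁻¹ E` has spectral radius `< 1`. -/
theorem stmt_9 {n n₁ m : ℕ}
    (E A : Matrix (Fin n₁) (Fin n) ℝ) (H : Matrix (Fin m) (Fin n) ℝ)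
    (Q : Matrix (Fin n₁) (Fin n₁) ℝ) (R : Matrix (Fin m) (Fin m) ℝ)
    (Pp : Matrix (Fin n) (Fin n) ℝ)
    (hQ : Q.PosDef) (hR : R.PosDef) (hPp : Pp.PosDef)
    (hrank : (Matrix.fromRows E H).rank = n)
    (hriccati : Pp = (Eᵀ * (A * Pp * Aᵀ + Q)⁻¹ * E + Hᵀ * R⁻¹ * H)⁻¹) :
    ∀ μ ∈ spectrum ℂ
      (((Pp⁻¹ + Aᵀ * Q⁻¹ * A)⁻¹ * Aᵀ * Q⁻¹ * E).map (algebraMap ℝ ℂ)), ‖μ‖ < 1 := by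
  have hPpdet : IsUnit Pp.det := hPp.det_pos.ne'.isUnit
  have hQdet : IsUnit Q.det := hQ.det_pos.ne'.isUnit
  -- Pm := A * Pp * Aᵀ + Q is positive definite; N := Pm⁻¹
  have hAPAt : (A * Pp * Aᵀ).PosSemidef := by
    have := hPp.posSemidef.mul_mul_conjTranspose_same A
    rwa [conjTranspose_eq_transpose_of_trivial] at this
  have hPm : (A * Pp * Aᵀ + Q).PosDef := Matrix.PosDef.posSemidef_add hAPAt hQ
  obtain ⟨Pm, hPm_def⟩ : ∃ X, (A * Pp * Aᵀ + Q) = X := ⟨_, rfl⟩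
  rw [hPm_def] at hriccati hPm
  have hPmdet : IsUnit Pm.det := hPm.det_pos.ne'.isUnit
  have hNpd : (Pm⁻¹).PosDef := hPm.inv
  obtain ⟨N, hN_def⟩ : ∃ X, Pm⁻¹ = X := ⟨_, rfl⟩
  rw [hN_def] at hriccati hNpd
  have hNPm : N * Pm = 1 := by rw [← hN_def]; exact Matrix.nonsing_inv_mul Pm hPmdet
  have hPmN : Pm * N = 1 := by rw [← hN_def]; exact Matrix.mul_nonsing_inv Pm hPmdet
  have hNdet : IsUnit N.det := hNpd.det_pos.ne'.isUnit
  -- S := Eᵀ * N * E + Hᵀ * R⁻¹ * H is positive definite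
  have hENE : (Eᵀ * N * E).PosSemidef := by
    have := hNpd.posSemidef.conjTranspose_mul_mul_same E
    rwa [conjTranspose_eq_transpose_of_trivial] at this
  have hHRH : (Hᵀ * R⁻¹ * H).PosSemidef := by
    have := hR.inv.posSemidef.conjTranspose_mul_mul_same H
    rwa [conjTranspose_eq_transpose_of_trivial] at this
  have hS : (Eᵀ * N * E + Hᵀ * R⁻¹ * H).PosDef := by
    refine .of_dotProduct_mulVec_pos (hENE.isHermitian.add hHRH.isHermitian) fun x hx => ?_
    rw [add_mulVec, dotProduct_add, quad_conj, quad_conj]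
    by_cases hEx : E *ᵥ x = 0
    · have hHx : H *ᵥ x ≠ 0 := fun h => hx (rank_inj hrank hEx h)
      rw [hEx]
      simpa using hR.inv.dotProduct_mulVec_pos hHx
    · exact add_pos_of_pos_of_nonneg (hNpd.dotProduct_mulVec_pos hEx) (hR.inv.posSemidef.dotProduct_mulVec_nonneg (H *ᵥ x))
  have hSdet : IsUnit (Eᵀ * N * E + Hᵀ * R⁻¹ * H).det := hS.det_pos.ne'.isUnit
  -- Pp⁻¹ = S
  have hPinv : Pp⁻¹ = Eᵀ * N * E + Hᵀ * R⁻¹ * H := by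
    rw [hriccati, Matrix.nonsing_inv_nonsing_inv _ hSdet]
  -- T := Pp⁻¹ + Aᵀ * Q⁻¹ * A is positive definite
  have hAQA : (Aᵀ * Q⁻¹ * A).PosSemidef := by
    have := hQ.inv.posSemidef.conjTranspose_mul_mul_same A
    rwa [conjTranspose_eq_transpose_of_trivial] at this
  have hT : (Pp⁻¹ + Aᵀ * Q⁻¹ * A).PosDef := Matrix.PosDef.add_posSemidef hPp.inv hAQA
  have hTdet : IsUnit (Pp⁻¹ + Aᵀ * Q⁻¹ * A).det := hT.det_pos.ne'.isUnit
  -- the coupling matrix in product form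
  have hkey : (Pp⁻¹ + Aᵀ * Q⁻¹ * A) * (Pp * Aᵀ) = Aᵀ * Q⁻¹ * Pm := by
    rw [← hPm_def]
    simp only [Matrix.add_mul, Matrix.mul_add, Matrix.mul_assoc]
    rw [← Matrix.mul_assoc Pp⁻¹ Pp Aᵀ, Matrix.nonsing_inv_mul Pp hPpdet, Matrix.one_mul]
    rw [Matrix.nonsing_inv_mul Q hQdet, Matrix.mul_one]
    abel
  have h1 : Pp * Aᵀ = (Pp⁻¹ + Aᵀ * Q⁻¹ * A)⁻¹ * (Aᵀ * Q⁻¹ * Pm) := by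
    rw [← hkey, ← Matrix.mul_assoc, Matrix.nonsing_inv_mul _ hTdet, Matrix.one_mul]
  have h2 : Pp * Aᵀ * N = (Pp⁻¹ + Aᵀ * Q⁻¹ * A)⁻¹ * Aᵀ * Q⁻¹ := by
    rw [h1]
    simp only [Matrix.mul_assoc]
    rw [hPmN, Matrix.mul_one]
  have hMeq : (Pp⁻¹ + Aᵀ * Q⁻¹ * A)⁻¹ * Aᵀ * Q⁻¹ * E = Pp * Aᵀ * N * E := by
    rw [← h2]
  -- symmetry facts
  have hNsymm : Nᵀ = N := by
    have := hNpd.isHermitian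
    rwa [IsHermitian, conjTranspose_eq_transpose_of_trivial] at this
  have hPpsymm : Ppᵀ = Pp := by
    have := hPp.isHermitian
    rwa [IsHermitian, conjTranspose_eq_transpose_of_trivial] at this
  have hMt : (Pp * Aᵀ * N * E)ᵀ = Eᵀ * N * (A * Pp) := by
    simp only [transpose_mul, transpose_transpose, hNsymm, hPpsymm, Matrix.mul_assoc]
  -- Lyapunov equation
  have hmid : (Pp * Aᵀ * N * E)ᵀ * Pp⁻¹ * (Pp * Aᵀ * N * E)
      = Eᵀ * N * E - Eᵀ * N * Q * N * E := by
    rw [hMt]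
    simp only [Matrix.mul_assoc]
    rw [← Matrix.mul_assoc Pp⁻¹ Pp, Matrix.nonsing_inv_mul Pp hPpdet, Matrix.one_mul]
    have hAPA : A * (Pp * (Aᵀ * (N * E))) = Pm * (N * E) - Q * (N * E) := by
      have : A * Pp * Aᵀ = Pm - Q := eq_sub_of_add_eq hPm_def
      calc A * (Pp * (Aᵀ * (N * E))) = (A * Pp * Aᵀ) * (N * E) := by
            simp only [Matrix.mul_assoc]
        _ = (Pm - Q) * (N * E) := by rw [this]
        _ = Pm * (N * E) - Q * (N * E) := by rw [Matrix.sub_mul]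
    rw [hAPA]
    rw [← Matrix.mul_assoc Pm N E, hPmN, Matrix.one_mul]
    simp only [Matrix.mul_sub, Matrix.sub_mul, Matrix.mul_assoc]
  have hlyap : Pp⁻¹ = (Pp * Aᵀ * N * E)ᵀ * Pp⁻¹ * (Pp * Aᵀ * N * E)
      + (Eᵀ * N * Q * N * E + Hᵀ * R⁻¹ * H) := by
    rw [hmid, hPinv]
    abel
  -- Qb is positive definite
  have hQb : (Eᵀ * N * Q * N * E + Hᵀ * R⁻¹ * H).PosDef := by
    have hEq : Eᵀ * N * Q * N * E = (N * E)ᵀ * Q * (N * E) := by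
      rw [transpose_mul, hNsymm]
      simp only [Matrix.mul_assoc]
    have hENQNE : (Eᵀ * N * Q * N * E).PosSemidef := by
      rw [hEq]
      have := hQ.posSemidef.conjTranspose_mul_mul_same (N * E)
      rwa [conjTranspose_eq_transpose_of_trivial] at this
    refine .of_dotProduct_mulVec_pos (hENQNE.isHermitian.add hHRH.isHermitian) fun x hx => ?_
    rw [add_mulVec, dotProduct_add, hEq, quad_conj, quad_conj]
    by_cases hEx : E *ᵥ x = 0
    · have hHx : H *ᵥ x ≠ 0 := fun h => hx (rank_inj hrank hEx h)
      have h0 : (N * E) *ᵥ x = 0 := by rw [← mulVec_mulVec, hEx, mulVec_zero]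
      rw [h0]
      simpa using hR.inv.dotProduct_mulVec_pos hHx
    · have hNEx : (N * E) *ᵥ x ≠ 0 := by
        rw [← mulVec_mulVec]
        intro h
        exact hEx (Matrix.mulVec_injective_iff_isUnit.mpr
          ((Matrix.isUnit_iff_isUnit_det N).mpr hNdet) (by simpa using h))
      exact add_pos_of_pos_of_nonneg (hQ.dotProduct_mulVec_pos hNEx) (hR.inv.posSemidef.dotProduct_mulVec_nonneg (H *ᵥ x))
  -- complexification
  intro μ hμ
  rw [hMeq] at hμ
  have hconj : ∀ (X : Matrix (Fin n) (Fin n) ℝ),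
      (X.map (algebraMap ℝ ℂ))ᴴ = Xᵀ.map (algebraMap ℝ ℂ) := by
    intro X
    ext i j
    simp [conjTranspose_apply, Matrix.map_apply, Complex.conj_ofReal]
  have hlyapc : (Pp⁻¹).map (algebraMap ℝ ℂ)
      = ((Pp * Aᵀ * N * E).map (algebraMap ℝ ℂ))ᴴ * ((Pp⁻¹).map (algebraMap ℝ ℂ))
          * ((Pp * Aᵀ * N * E).map (algebraMap ℝ ℂ))
        + ((Eᵀ * N * Q * N * E + Hᵀ * R⁻¹ * H).map (algebraMap ℝ ℂ)) := by
    conv_lhs => rw [hlyap]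
    rw [Matrix.map_add, Matrix.map_mul, Matrix.map_mul, hconj]
    exact fun a₁ a₂ => map_add (algebraMap ℝ ℂ) a₁ a₂
  obtain ⟨v, hv, hvec⟩ := eig_of_mem_spectrum hμ
  have hPcPD : ((Pp⁻¹).map (algebraMap ℝ ℂ)).PosDef := map_posDef hPp.inv
  have hQcPD : ((Eᵀ * N * Q * N * E + Hᵀ * R⁻¹ * H).map (algebraMap ℝ ℂ)).PosDef :=
    map_posDef hQb
  set Pc := (Pp⁻¹).map (algebraMap ℝ ℂ) with hPc
  set Mc := (Pp * Aᵀ * N * E).map (algebraMap ℝ ℂ) with hMc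
  set Qc := (Eᵀ * N * Q * N * E + Hᵀ * R⁻¹ * H).map (algebraMap ℝ ℂ) with hQc
  set c := star v ⬝ᵥ Pc *ᵥ v with hc
  set d := star v ⬝ᵥ Qc *ᵥ v with hd
  have hcpos : 0 < c := hPcPD.dotProduct_mulVec_pos hv
  have hdpos : 0 < d := hQcPD.dotProduct_mulVec_pos hv
  have heq : c = (Complex.normSq μ : ℂ) * c + d := by
    conv_lhs => rw [hc, hlyapc]
    rw [add_mulVec, dotProduct_add, quad_conjC, hvec]
    congr 1
    rw [star_smul, smul_dotProduct, mulVec_smul, dotProduct_smul, ← hc]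
    rw [smul_eq_mul, smul_eq_mul, ← mul_assoc]
    congr 1
    rw [Complex.star_def, ← Complex.normSq_eq_conj_mul_self]
  have hcre : 0 < c.re := by
    rw [Complex.lt_def] at hcpos; exact hcpos.1
  have hdre : 0 < d.re := by
    rw [Complex.lt_def] at hdpos; exact hdpos.1
  have hre : c.re = Complex.normSq μ * c.re + d.re := by
    conv_lhs => rw [heq]
    simp [Complex.add_re, Complex.mul_re]
  have hnsq : Complex.normSq μ < 1 := by nlinarith
  have habs : ‖μ‖ ^ 2 = Complex.normSq μ := by
    rw [Complex.sq_norm]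
  nlinarith [norm_nonneg μ]
end

section
/- Let P∞⁺ be a symmetric positive definite fixed point of the descriptor Riccati equation as above, and set P∞⁻ = A P∞⁺ Aᵀ + Q, L = P∞⁺ Eᵀ (P∞⁻)⁻¹, K = P∞⁺ Hᵀ R⁻¹. Then P∞⁺ = (LA) P∞⁺ (LA)ᵀ + L Q Lᵀ + K R Kᵀ. -/
open Matrix

/-- Steady-state Kalman filter Lyapunov form of the descriptor Riccati equation:
with `P∞⁻ = A P∞⁺ Aᵀ + Q`, `L = P∞⁺ Eᵀ (P∞⁻)⁻¹`, `K = P∞⁺ Hᵀ R⁻¹`, one has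
`P∞⁺ = (LA) P∞⁺ (LA)ᵀ + L Q Lᵀ + K R Kᵀ`. -/
theorem stmt_10 {n n₁ m : ℕ}
    (E A : Matrix (Fin n₁) (Fin n) ℝ) (H : Matrix (Fin m) (Fin n) ℝ)
    (Q : Matrix (Fin n₁) (Fin n₁) ℝ) (R : Matrix (Fin m) (Fin m) ℝ)
    (Pp : Matrix (Fin n) (Fin n) ℝ)
    (hQ : Q.PosDef) (hR : R.PosDef) (hPp : Pp.PosDef)
    (hrank : (Matrix.fromRows E H).rank = n)
    (hriccati : Pp = (Eᵀ * (A * Pp * Aᵀ + Q)⁻¹ * E + Hᵀ * R⁻¹ * H)⁻¹) :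
    Pp = (Pp * Eᵀ * (A * Pp * Aᵀ + Q)⁻¹ * A) * Pp * (Pp * Eᵀ * (A * Pp * Aᵀ + Q)⁻¹ * A)ᵀ +
      (Pp * Eᵀ * (A * Pp * Aᵀ + Q)⁻¹) * Q * (Pp * Eᵀ * (A * Pp * Aᵀ + Q)⁻¹)ᵀ +
      (Pp * Hᵀ * R⁻¹) * R * (Pp * Hᵀ * R⁻¹)ᵀ := by
  set S := A * Pp * Aᵀ + Q with hSdef
  have hSpd : S.PosDef := by
    have h1 : (A * Pp * Aᵀ).PosSemidef := by
      have := hPp.posSemidef.mul_mul_conjTranspose_same A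
      simpa using this
    exact Matrix.PosDef.posSemidef_add h1 hQ
  have hSsym : Sᵀ = S := by simpa using hSpd.isHermitian.eq
  have hSinv_sym : (S⁻¹)ᵀ = S⁻¹ := by rw [transpose_nonsing_inv, hSsym]
  have hRsym : Rᵀ = R := by simpa using hR.isHermitian.eq
  have hRinv_sym : (R⁻¹)ᵀ = R⁻¹ := by rw [transpose_nonsing_inv, hRsym]
  have hPsym : Ppᵀ = Pp := by simpa using hPp.isHermitian.eq
  have hS1 : S⁻¹ * S = 1 := nonsing_inv_mul S hSpd.det_pos.ne'.isUnit
  have hR1 : R⁻¹ * R = 1 := nonsing_inv_mul R hR.det_pos.ne'.isUnit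
  set M := Eᵀ * S⁻¹ * E + Hᵀ * R⁻¹ * H with hMdef
  have hMunit : IsUnit M.det := by
    rw [← isUnit_nonsing_inv_det_iff, ← hriccati]
    exact hPp.det_pos.ne'.isUnit
  have hPpM : Pp * M = 1 := by rw [hriccati]; exact nonsing_inv_mul M hMunit
  have e1 : (Pp * Eᵀ * S⁻¹ * A) * Pp * (Pp * Eᵀ * S⁻¹ * A)ᵀ +
      (Pp * Eᵀ * S⁻¹) * Q * (Pp * Eᵀ * S⁻¹)ᵀ = Pp * (Eᵀ * S⁻¹ * E) * Pp := by
    simp only [transpose_mul, transpose_transpose, hSinv_sym, hPsym]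
    have h2 : Pp * Eᵀ * S⁻¹ * A * Pp * (Aᵀ * (S⁻¹ * (E * Pp))) +
        Pp * Eᵀ * S⁻¹ * Q * (S⁻¹ * (E * Pp)) =
        Pp * Eᵀ * (S⁻¹ * (A * Pp * Aᵀ + Q) * S⁻¹) * E * Pp := by
      simp only [Matrix.mul_add, Matrix.add_mul, Matrix.mul_assoc]
    rw [h2, ← hSdef, hS1, Matrix.one_mul]
    simp only [Matrix.mul_assoc]
  have e2 : (Pp * Hᵀ * R⁻¹) * R * (Pp * Hᵀ * R⁻¹)ᵀ = Pp * (Hᵀ * R⁻¹ * H) * Pp := by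
    simp only [transpose_mul, transpose_transpose, hRinv_sym, hPsym]
    have h2 : Pp * Hᵀ * R⁻¹ * R * (R⁻¹ * (H * Pp)) =
        Pp * Hᵀ * (R⁻¹ * R * R⁻¹) * H * Pp := by
      simp only [Matrix.mul_assoc]
    rw [h2, hR1, Matrix.one_mul]
    simp only [Matrix.mul_assoc]
  rw [e1, e2, ← Matrix.add_mul, ← Matrix.mul_add, ← hMdef, hPpM, Matrix.one_mul]
end

section
/- Under the hypotheses of the previous statement, if additionally the matrix L Q Lᵀ + K R Kᵀ is positive definite, then the spectral radius of LA is strictly less than 1; hence for the noise-free error dynamics x̃_{k+1} = (LA) x̃_k, the error x̃_k converges to 0 for any initial error. -/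
open Matrix Filter
open scoped Matrix.Norms.L2Operator ENNReal NNReal

lemma aux_re_quad {n : ℕ} {P : Matrix (Fin n) (Fin n) ℝ} (hP : P.PosDef)
    (x : Fin n → ℂ) (hx : x ≠ 0) :
    0 < (star x ⬝ᵥ ((P.map (algebraMap ℝ ℂ)) *ᵥ x)).re := by
  classical
  set a : Fin n → ℝ := fun i => (x i).re with ha
  set b : Fin n → ℝ := fun i => (x i).im with hb
  have key : (star x ⬝ᵥ ((P.map (algebraMap ℝ ℂ)) *ᵥ x)).re
      = a ⬝ᵥ (P *ᵥ a) + b ⬝ᵥ (P *ᵥ b) := by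
    simp only [dotProduct, Matrix.mulVec, Matrix.map_apply, Pi.star_apply,
      Finset.mul_sum, Complex.re_sum, ← Finset.sum_add_distrib]
    refine Finset.sum_congr rfl fun i _ => ?_
    refine Finset.sum_congr rfl fun j _ => ?_
    simp only [RCLike.star_def, Complex.mul_re, Complex.mul_im, Complex.conj_re,
      Complex.conj_im, Complex.coe_algebraMap, Complex.ofReal_re, Complex.ofReal_im, ha, hb]
    ring
  rw [key]
  have hab : a ≠ 0 ∨ b ≠ 0 := by
    by_contra h
    push_neg at h
    apply hx
    funext i
    have h1 := congrFun h.1 i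
    have h2 := congrFun h.2 i
    simp only [ha, hb, Pi.zero_apply] at h1 h2
    exact Complex.ext h1 h2
  have hsa : 0 ≤ a ⬝ᵥ (P *ᵥ a) := by simpa using hP.posSemidef.dotProduct_mulVec_nonneg a
  have hsb : 0 ≤ b ⬝ᵥ (P *ᵥ b) := by simpa using hP.posSemidef.dotProduct_mulVec_nonneg b
  rcases hab with h | h
  · have := hP.dotProduct_mulVec_pos h
    simp only [star_trivial] at this
    linarith
  · have := hP.dotProduct_mulVec_pos h
    simp only [star_trivial] at this
    linarith

lemma aux_eig {n : ℕ} {M P S : Matrix (Fin n) (Fin n) ℝ}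
    (hP : P.PosDef) (hS : S.PosDef) (hlyap : P = M * P * Mᵀ + S) :
    ∀ μ ∈ spectrum ℂ (M.map (algebraMap ℝ ℂ)), ‖μ‖ < 1 := by
  classical
  intro μ hμ
  set f := algebraMap ℝ ℂ with hf
  set N := M.map f with hN
  -- the matrix μ • 1 - N is singular
  have h1 : ¬ IsUnit (μ • (1 : Matrix (Fin n) (Fin n) ℂ) - N) := by
    have := spectrum.mem_iff.mp hμ
    rwa [Algebra.algebraMap_eq_smul_one] at this
  have hdet : (μ • (1 : Matrix (Fin n) (Fin n) ℂ) - N).det = 0 := by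
    by_contra hd
    exact h1 ((Matrix.isUnit_iff_isUnit_det _).mpr (isUnit_iff_ne_zero.mpr hd))
  have hdetT : (μ • (1 : Matrix (Fin n) (Fin n) ℂ) - Nᵀ).det = 0 := by
    have := hdet
    rw [← Matrix.det_transpose] at this
    rwa [Matrix.transpose_sub, Matrix.transpose_smul, Matrix.transpose_one] at this
  obtain ⟨w, hw0, hww⟩ := (Matrix.exists_mulVec_eq_zero_iff).mpr hdetT
  have heig : Nᵀ *ᵥ w = μ • w := by
    rw [Matrix.sub_mulVec, sub_eq_zero, Matrix.smul_mulVec, Matrix.one_mulVec] at hww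
    exact hww.symm
  -- complexified Lyapunov equation
  have hlyapC : P.map f = N * P.map f * Nᵀ + S.map f := by
    have := congrArg (fun X : Matrix (Fin n) (Fin n) ℝ => X.map f) hlyap
    simpa [Matrix.map_add, Matrix.map_mul, Matrix.transpose_map] using this
  -- left eigenvector relation
  have hNH : Nᵀᴴ = N := by
    ext i j
    simp [Matrix.conjTranspose_apply, hN, Matrix.map_apply, hf, Complex.conj_ofReal]
  have hvm : star w ᵥ* N = (starRingEnd ℂ μ) • star w := by
    have h2 : star (Nᵀ *ᵥ w) = star w ᵥ* N := by
      rw [Matrix.star_mulVec, hNH]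
    rw [← h2, heig, star_smul]
    simp [RCLike.star_def]
  -- quadratic form identity
  have key : star w ⬝ᵥ (P.map f *ᵥ w)
      = (starRingEnd ℂ μ * μ) * (star w ⬝ᵥ (P.map f *ᵥ w)) + star w ⬝ᵥ (S.map f *ᵥ w) := by
    conv_lhs => rw [hlyapC]
    rw [Matrix.add_mulVec, dotProduct_add]
    congr 1
    have : (N * P.map f * Nᵀ) *ᵥ w = N *ᵥ (P.map f *ᵥ (μ • w)) := by
      rw [← Matrix.mulVec_mulVec, ← Matrix.mulVec_mulVec, heig]
    rw [this, Matrix.mulVec_smul, Matrix.mulVec_smul, dotProduct_smul,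
      Matrix.dotProduct_mulVec, hvm, smul_dotProduct]
    simp only [smul_eq_mul]
    ring
  -- take real parts
  have hre : (star w ⬝ᵥ (P.map f *ᵥ w)).re
      = Complex.normSq μ * (star w ⬝ᵥ (P.map f *ᵥ w)).re + (star w ⬝ᵥ (S.map f *ᵥ w)).re := by
    have hc : (starRingEnd ℂ μ * μ : ℂ) = (Complex.normSq μ : ℂ) := by
      rw [mul_comm, Complex.mul_conj]
    conv_lhs => rw [key]
    rw [hc, Complex.add_re, Complex.re_ofReal_mul]
  have hqP := aux_re_quad hP w hw0
  have hqS := aux_re_quad hS w hw0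
  have hnsq : Complex.normSq μ < 1 := by
    by_contra hle
    push_neg at hle
    nlinarith
  have habs : ‖μ‖ ^ 2 = Complex.normSq μ := Complex.sq_norm μ
  nlinarith [norm_nonneg μ]

lemma eucl_coord_le {n : ℕ} (v : EuclideanSpace ℂ (Fin n)) (j : Fin n) : ‖v j‖ ≤ ‖v‖ := by
  rw [EuclideanSpace.norm_eq]
  rw [show ‖v j‖ = Real.sqrt (‖v j‖ ^ 2) from (Real.sqrt_sq (norm_nonneg _)).symm]
  exact Real.sqrt_le_sqrt (Finset.single_le_sum (f := fun i => ‖v i‖ ^ 2) (fun i _ => sq_nonneg _) (Finset.mem_univ j))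

lemma aux_conv {n : ℕ} (M : Matrix (Fin n) (Fin n) ℝ)
    (hspec : ∀ μ ∈ spectrum ℂ (M.map (algebraMap ℝ ℂ)), ‖μ‖ < 1) :
    ∀ e₀ : Fin n → ℝ, Tendsto (fun k : ℕ => ((M ^ k)) *ᵥ e₀) atTop (nhds 0) := by
  classical
  set N : Matrix (Fin n) (Fin n) ℂ := M.map (algebraMap ℝ ℂ) with hNdef
  -- spectral radius bound
  have hfin : (spectrum ℂ N).Finite := Matrix.finite_spectrum N
  have hsp : spectralRadius ℂ N < 1 := by
    set s := hfin.toFinset with hs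
    have hval : ∀ μ ∈ s, ‖μ‖₊ < 1 := by
      intro μ hμ
      have h := hspec μ (hfin.mem_toFinset.mp hμ)
      exact_mod_cast h
    have hr : s.sup (fun μ => ‖μ‖₊) < 1 := (Finset.sup_lt_iff (by norm_num)).mpr hval
    have hle : spectralRadius ℂ N ≤ (s.sup (fun μ => ‖μ‖₊) : ℝ≥0∞) := by
      refine iSup₂_le fun μ hμ => ?_
      exact_mod_cast ENNReal.coe_le_coe.mpr
        (Finset.le_sup (f := fun μ => ‖μ‖₊) (hfin.mem_toFinset.mpr hμ))
    exact lt_of_le_of_lt hle (by exact_mod_cast hr)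
  -- Gelfand formula
  haveI : CompleteSpace (Matrix (Fin n) (Fin n) ℂ) := FiniteDimensional.complete ℂ _
  have hG := spectrum.pow_nnnorm_pow_one_div_tendsto_nhds_spectralRadius N
  obtain ⟨c, hc1, hc2⟩ := exists_between hsp
  have hcne : c ≠ ⊤ := ne_top_of_lt hc2
  set c₀ : NNReal := c.toNNReal with hc₀
  have hcc : c = (c₀ : ℝ≥0∞) := (ENNReal.coe_toNNReal hcne).symm
  have hc₀1 : (c₀ : ℝ) < 1 := by
    have : (c₀ : ℝ≥0∞) < 1 := hcc ▸ hc2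
    exact_mod_cast this
  have hev : ∀ᶠ k : ℕ in atTop, ((‖N ^ k‖₊ : ℝ≥0∞)) ^ (1 / (k : ℝ)) < c :=
    hG.eventually_lt_const hc1
  have hbound : ∀ᶠ k : ℕ in atTop, ‖N ^ k‖ ≤ (c₀ : ℝ) ^ k := by
    filter_upwards [hev, eventually_ge_atTop 1] with k hk hk1
    have hk0 : (k : ℝ) ≠ 0 := Nat.cast_ne_zero.mpr (by omega)
    have h1 : (‖N ^ k‖₊ : ℝ≥0∞) = ((‖N ^ k‖₊ : ℝ≥0∞) ^ (1 / (k : ℝ))) ^ (k : ℝ) := by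
      rw [← ENNReal.rpow_mul, one_div, inv_mul_cancel₀ hk0, ENNReal.rpow_one]
    have h2 : (‖N ^ k‖₊ : ℝ≥0∞) ≤ c ^ (k : ℝ) := by
      rw [h1]
      exact ENNReal.rpow_le_rpow hk.le (Nat.cast_nonneg k)
    rw [hcc, ← ENNReal.coe_rpow_of_nonneg _ (Nat.cast_nonneg k)] at h2
    have h3 : ‖N ^ k‖₊ ≤ c₀ ^ (k : ℝ) := ENNReal.coe_le_coe.mp h2
    have h4 : (‖N ^ k‖ : ℝ) ≤ ((c₀ ^ (k : ℝ) : NNReal) : ℝ) := h3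
    rwa [NNReal.coe_rpow, Real.rpow_natCast] at h4
  have hnorm : Tendsto (fun k : ℕ => ‖N ^ k‖) atTop (nhds 0) := by
    refine squeeze_zero' (Eventually.of_forall fun k => norm_nonneg _) hbound ?_
    exact tendsto_pow_atTop_nhds_zero_of_lt_one c₀.coe_nonneg hc₀1
  -- conclude for vectors
  intro e₀
  set xc : Fin n → ℂ := fun i => ((e₀ i : ℝ) : ℂ) with hxc
  have hmap : ∀ k : ℕ, N ^ k = (M ^ k).map (algebraMap ℝ ℂ) := by
    intro k
    rw [hNdef, ← RingHom.mapMatrix_apply, ← map_pow, RingHom.mapMatrix_apply]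
  have hvec : ∀ k : ℕ, (N ^ k) *ᵥ xc = fun j => (((M ^ k) *ᵥ e₀) j : ℂ) := by
    intro k
    funext j
    rw [hmap k]
    simp only [Matrix.mulVec, dotProduct, Matrix.map_apply, hxc]
    push_cast
    rfl
  rw [tendsto_pi_nhds]
  intro j
  simp only [Pi.zero_apply]
  refine squeeze_zero_norm (a := fun k => ‖N ^ k‖ * ‖(EuclideanSpace.equiv (Fin n) ℂ).symm xc‖)
    (fun k => ?_) ?_
  · have hle1 : ‖((N ^ k) *ᵥ xc) j‖ ≤ ‖(EuclideanSpace.equiv (Fin n) ℂ).symm ((N ^ k) *ᵥ xc)‖ :=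
      eucl_coord_le ((EuclideanSpace.equiv (Fin n) ℂ).symm ((N ^ k) *ᵥ xc)) j
    have hle2 := Matrix.l2_opNorm_mulVec (N ^ k) ((EuclideanSpace.equiv (Fin n) ℂ).symm xc)
    have heq : ‖(((M ^ k) *ᵥ e₀) j : ℝ)‖ = ‖((N ^ k) *ᵥ xc) j‖ := by
      rw [hvec k]
      simp [Complex.norm_real]
    rw [heq]
    exact hle1.trans hle2
  · rw [show (0 : ℝ) = 0 * ‖(EuclideanSpace.equiv (Fin n) ℂ).symm xc‖ by ring]
    exact hnorm.mul_const _


/-- Stability of the steady-state descriptor Kalman filter: if `P∞⁺ > 0` satisfies the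
Lyapunov form `P∞⁺ = (LA)P∞⁺(LA)ᵀ + LQLᵀ + KRKᵀ` and `LQLᵀ + KRKᵀ` is positive definite,
then `LA` has spectral radius `< 1` and the noise-free error dynamics
`x̃_{k+1} = (LA) x̃_k` converge to zero from any initial error. -/
theorem stmt_11 {n n₁ m : ℕ}
    (E A : Matrix (Fin n₁) (Fin n) ℝ) (H : Matrix (Fin m) (Fin n) ℝ)
    (Q : Matrix (Fin n₁) (Fin n₁) ℝ) (R : Matrix (Fin m) (Fin m) ℝ)
    (Pp : Matrix (Fin n) (Fin n) ℝ)
    (hQ : Q.PosDef) (hR : R.PosDef) (hPp : Pp.PosDef)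
    (hrank : (Matrix.fromRows E H).rank = n)
    (L : Matrix (Fin n) (Fin n₁) ℝ) (K : Matrix (Fin n) (Fin m) ℝ)
    (hL : L = Pp * Eᵀ * (A * Pp * Aᵀ + Q)⁻¹)
    (hK : K = Pp * Hᵀ * R⁻¹)
    (hlyap : Pp = (L * A) * Pp * (L * A)ᵀ + L * Q * Lᵀ + K * R * Kᵀ)
    (hpos : (L * Q * Lᵀ + K * R * Kᵀ).PosDef) :
    (∀ μ ∈ spectrum ℂ ((L * A).map (algebraMap ℝ ℂ)), ‖μ‖ < 1) ∧
    ∀ e₀ : Fin n → ℝ,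
      Tendsto (fun k : ℕ => ((L * A) ^ k) *ᵥ e₀) atTop (nhds 0) := by
  have hlyap' : Pp = (L * A) * Pp * (L * A)ᵀ + (L * Q * Lᵀ + K * R * Kᵀ) := by
    rw [add_assoc] at hlyap
    exact hlyap
  have h1 := aux_eig hPp hpos hlyap'
  exact ⟨h1, aux_conv _ h1⟩
end
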